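/- arXiv:2001.10846 — 2 statements merged into one kernel-verified Lean document; each statement's English description precedes it below -/
import Mathlib

section
/- Let g(t) = |t−1| on [0,2]. Then for every β ∈ (0,1): (i) the Caputo fractional derivative of order 1−β with base point 0 satisfies ᶜ₀D^{1−β}g(t) = −t^β/Γ(β+1) for t ∈ (0,1] and ᶜ₀D^{1−β}g(t) = (2(t−1)^β − t^β)/Γ(β+1) for t ∈ (1,2]; (ii) the L¹ error satisfies E_{g,1}(β) = ‖ᶜ₀D^{1−β}g − g'‖_{L¹(0,2)} ≥ (Γ(β+2) − 3 + 2^{β+1})/Γ(β+2); and (iii) consequently liminf_{β→0⁺} E_{g,1}(β)/β ≥ Γ'(2) + 2·ln 2 > 0, so the Caputo L¹ error is not o(β) in general. -/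
open MeasureTheory Filter Set

/-- Caputo fractional derivative of order `α` with base point `a`,
expressed in terms of the a.e. derivative `g'`. -/
noncomputable def caputoD (a α : ℝ) (g' : ℝ → ℝ) (t : ℝ) : ℝ :=
  (1 / Real.Gamma (1 - α)) * ∫ τ in a..t, g' τ * (t - τ) ^ (-α)

/-- The a.e. derivative of `g(t) = |t - 1|`. -/
noncomputable def absDeriv (t : ℝ) : ℝ := if t ≤ 1 then -1 else 1

/-- Caputo L¹ error on `(0,2)` for `g(t) = |t-1|` at order `1-β`. -/
noncomputable def caputoAbsErr (β : ℝ) : ℝ :=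
  ∫ t in Set.Ioo (0 : ℝ) 2, |caputoD 0 (1 - β) absDeriv t - absDeriv t|

/-! ### Auxiliary material -/

lemma caputo_left {β : ℝ} (hβ : β ∈ Set.Ioo (0:ℝ) 1) {t : ℝ} (ht : t ∈ Set.Ioc (0:ℝ) 1) :
    caputoD 0 (1 - β) absDeriv t = -(t ^ β) / Real.Gamma (β + 1) := by
  obtain ⟨hβ0, hβ1⟩ := hβ
  obtain ⟨ht0, ht1⟩ := ht
  have hΓ : Real.Gamma (β + 1) = β * Real.Gamma β := Real.Gamma_add_one hβ0.ne'
  have hΓβ : 0 < Real.Gamma β := Real.Gamma_pos_of_pos hβ0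
  rw [caputoD, show (1:ℝ) - (1 - β) = β by ring, show -(1 - β) = β - 1 by ring]
  have h1 : ∀ τ ∈ Set.uIcc (0:ℝ) t, absDeriv τ * (t - τ) ^ (β - 1)
      = (fun τ => -((t - τ) ^ (β - 1))) τ := by
    intro τ hτ
    rw [Set.uIcc_of_le ht0.le] at hτ
    have : τ ≤ 1 := hτ.2.trans ht1
    simp [absDeriv, this]
  rw [intervalIntegral.integral_congr h1]
  rw [intervalIntegral.integral_neg]
  rw [intervalIntegral.integral_comp_sub_left (fun x => x ^ (β - 1)) t]
  rw [sub_self, sub_zero, integral_rpow (Or.inl (by linarith))]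
  rw [sub_add_cancel, Real.zero_rpow hβ0.ne']
  rw [hΓ, sub_zero]
  ring

lemma caputo_right {β : ℝ} (hβ : β ∈ Set.Ioo (0:ℝ) 1) {t : ℝ} (ht : t ∈ Set.Ioc (1:ℝ) 2) :
    caputoD 0 (1 - β) absDeriv t = (2 * (t - 1) ^ β - t ^ β) / Real.Gamma (β + 1) := by
  obtain ⟨hβ0, hβ1⟩ := hβ
  obtain ⟨ht1, ht2⟩ := ht
  have hr : (-1:ℝ) < β - 1 := by linarith
  have hΓ : Real.Gamma (β + 1) = β * Real.Gamma β := Real.Gamma_add_one hβ0.ne'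
  have hΓβ : 0 < Real.Gamma β := Real.Gamma_pos_of_pos hβ0
  rw [caputoD, show (1:ℝ) - (1 - β) = β by ring, show -(1 - β) = β - 1 by ring]
  have hc1 : ContinuousOn (fun τ : ℝ => -((t - τ) ^ (β - 1))) (Set.uIcc (0:ℝ) 1) := by
    apply ContinuousOn.neg
    apply ContinuousOn.rpow_const
    · exact (continuous_const.sub continuous_id).continuousOn
    · intro x hx
      rw [Set.uIcc_of_le (by norm_num : (0:ℝ) ≤ 1)] at hx
      left
      have : x ≤ 1 := hx.2
      have : 0 < t - x := by linarith
      exact this.ne'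
  have heq1 : Set.EqOn (fun τ => absDeriv τ * (t - τ) ^ (β - 1))
      (fun τ : ℝ => -((t - τ) ^ (β - 1))) (Set.uIcc (0:ℝ) 1) := by
    intro τ hτ
    rw [Set.uIcc_of_le (by norm_num : (0:ℝ) ≤ 1)] at hτ
    simp [absDeriv, hτ.2]
  have I1 : IntervalIntegrable (fun τ => absDeriv τ * (t - τ) ^ (β - 1)) volume 0 1 :=
    (hc1.congr heq1).intervalIntegrable
  have Ig : IntervalIntegrable (fun τ : ℝ => (t - τ) ^ (β - 1)) volume 1 t := by
    have := (intervalIntegral.intervalIntegrable_rpow' (a := 0) (b := t - 1) hr).comp_sub_left t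
    simpa using this.symm
  have I2 : IntervalIntegrable (fun τ => absDeriv τ * (t - τ) ^ (β - 1)) volume 1 t := by
    rw [intervalIntegrable_iff] at Ig ⊢
    apply Ig.congr_fun
    · intro τ hτ
      rw [Set.uIoc_of_le ht1.le] at hτ
      simp [absDeriv, not_le.mpr hτ.1]
    · exact measurableSet_uIoc
  rw [← intervalIntegral.integral_add_adjacent_intervals I1 I2]
  have e1 : (∫ τ in (0:ℝ)..1, absDeriv τ * (t - τ) ^ (β - 1))
      = -((t ^ β - (t - 1) ^ β) / β) := by
    rw [intervalIntegral.integral_congr heq1, intervalIntegral.integral_neg,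
      intervalIntegral.integral_comp_sub_left (fun x => x ^ (β - 1)) t,
      integral_rpow (Or.inl hr), sub_zero, sub_add_cancel]
  have e2 : (∫ τ in (1:ℝ)..t, absDeriv τ * (t - τ) ^ (β - 1)) = (t - 1) ^ β / β := by
    have : (∫ τ in (1:ℝ)..t, absDeriv τ * (t - τ) ^ (β - 1))
        = ∫ τ in (1:ℝ)..t, (t - τ) ^ (β - 1) := by
      apply intervalIntegral.integral_congr_ae
      have hae : ∀ᵐ x : ℝ, x ≠ 1 := by
        rw [ae_iff]
        simpa [Set.setOf_eq_eq_singleton] using measure_singleton (1:ℝ)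
      filter_upwards [hae] with x hx hmem
      rw [Set.uIoc_of_le ht1.le] at hmem
      simp [absDeriv, not_le.mpr hmem.1]
    rw [this, intervalIntegral.integral_comp_sub_left (fun x => x ^ (β - 1)) t,
      sub_self, integral_rpow (Or.inl hr), sub_add_cancel, Real.zero_rpow hβ0.ne', sub_zero]
  rw [e1, e2, hΓ]
  ring

/-- The explicit piecewise form of `ᶜ₀D^{1-β}g - g'` on `(0,2)`. -/
noncomputable def Hfun (β t : ℝ) : ℝ :=
  if t ≤ 1 then 1 - t ^ β / Real.Gamma (β + 1)
  else (2 * (t - 1) ^ β - t ^ β) / Real.Gamma (β + 1) - 1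

lemma Hfun_pt {β : ℝ} (hβ : β ∈ Set.Ioo (0:ℝ) 1) : ∀ t ∈ Set.Ioo (0:ℝ) 2,
    caputoD 0 (1 - β) absDeriv t - absDeriv t = Hfun β t := by
  intro t ht
  by_cases h : t ≤ 1
  · rw [caputo_left hβ ⟨ht.1, h⟩, Hfun, if_pos h, absDeriv, if_pos h]
    ring
  · push_neg at h
    rw [caputo_right hβ ⟨h, ht.2.le⟩, Hfun, if_neg (not_le.mpr h), absDeriv,
      if_neg (not_le.mpr h)]

lemma Hfun_integrableOn {β : ℝ} (hβ : β ∈ Set.Ioo (0:ℝ) 1) :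
    IntegrableOn (Hfun β) (Set.Ioo (0:ℝ) 2) volume := by
  obtain ⟨hβ0, hβ1⟩ := hβ
  have hΓ1 : 0 < Real.Gamma (β + 1) := Real.Gamma_pos_of_pos (by linarith)
  have hcr : Continuous fun t : ℝ => t ^ β := Real.continuous_rpow_const hβ0.le
  have hmeas : Measurable (Hfun β) := by
    apply Measurable.ite (measurableSet_Iic (a := (1:ℝ)))
    · exact (continuous_const.sub (hcr.div_const _)).measurable
    · exact ((((continuous_const.mul (hcr.comp (continuous_id.sub continuous_const))).sub
        hcr).div_const _).sub continuous_const).measurable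
  have hbd : ∀ t ∈ Set.Ioo (0:ℝ) 2, |Hfun β t| ≤ 4 / Real.Gamma (β + 1) + 1 := by
    intro t ht
    rw [Hfun]
    split_ifs with h
    · have h1 : t ^ β ≤ 1 := Real.rpow_le_one ht.1.le h hβ0.le
      have h2 : (0:ℝ) ≤ t ^ β := Real.rpow_nonneg ht.1.le β
      have h3 : t ^ β / Real.Gamma (β + 1) ≤ 4 / Real.Gamma (β + 1) := by
        gcongr
        linarith
      have h4 : (0:ℝ) ≤ t ^ β / Real.Gamma (β + 1) := div_nonneg h2 hΓ1.le
      rw [abs_le]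
      constructor <;> linarith
    · push_neg at h
      have h1 : (t - 1) ^ β ≤ 1 := Real.rpow_le_one (by linarith) (by linarith [ht.2]) hβ0.le
      have h1' : (0:ℝ) ≤ (t - 1) ^ β := Real.rpow_nonneg (by linarith) β
      have h2 : t ^ β ≤ 2 := by
        calc t ^ β ≤ 2 ^ β := Real.rpow_le_rpow (by linarith) ht.2.le hβ0.le
        _ ≤ 2 ^ (1:ℝ) := Real.rpow_le_rpow_of_exponent_le (by norm_num) hβ1.le
        _ = 2 := by norm_num
      have h2' : (0:ℝ) ≤ t ^ β := Real.rpow_nonneg (by linarith) β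
      have habs : |2 * (t - 1) ^ β - t ^ β| ≤ 4 := by
        rw [abs_le]; constructor <;> nlinarith
      calc |(2 * (t - 1) ^ β - t ^ β) / Real.Gamma (β + 1) - 1|
          ≤ |(2 * (t - 1) ^ β - t ^ β) / Real.Gamma (β + 1)| + 1 := by
            have := abs_sub ((2 * (t - 1) ^ β - t ^ β) / Real.Gamma (β + 1)) (1:ℝ)
            simpa using this
        _ ≤ 4 / Real.Gamma (β + 1) + 1 := by
            rw [abs_div, abs_of_pos hΓ1]
            gcongr
  apply Measure.integrableOn_of_bounded (M := 4 / Real.Gamma (β + 1) + 1)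
  · exact ((measure_Ioo_lt_top (a := (0:ℝ)) (b := 2)).ne)
  · exact hmeas.aestronglyMeasurable
  · rw [ae_restrict_iff' measurableSet_Ioo]
    exact ae_of_all _ fun t ht => by simpa using hbd t ht

lemma caputoAbsErr_eq {β : ℝ} (hβ : β ∈ Set.Ioo (0:ℝ) 1) :
    caputoAbsErr β = ∫ t in Set.Ioo (0:ℝ) 2, |Hfun β t| := by
  rw [caputoAbsErr]
  exact setIntegral_congr_fun measurableSet_Ioo fun t ht => by rw [Hfun_pt hβ t ht]

lemma caputo_err_lb {β : ℝ} (hβ : β ∈ Set.Ioo (0:ℝ) 1) :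
    (Real.Gamma (β + 2) - 3 + 2 ^ (β + 1)) / Real.Gamma (β + 2) ≤ caputoAbsErr β := by
  obtain ⟨hβ0, hβ1⟩ := hβ
  have hΓ1 : 0 < Real.Gamma (β + 1) := Real.Gamma_pos_of_pos (by linarith)
  have hΓ2 : Real.Gamma (β + 2) = (β + 1) * Real.Gamma (β + 1) := by
    rw [show β + 2 = (β + 1) + 1 by ring, Real.Gamma_add_one (by positivity)]
  have hΓ2pos : 0 < Real.Gamma (β + 2) := by rw [hΓ2]; positivity
  have hcr : Continuous fun t : ℝ => t ^ β := Real.continuous_rpow_const hβ0.le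
  have hint : IntegrableOn (Hfun β) (Set.Ioo (0:ℝ) 2) volume := Hfun_integrableOn ⟨hβ0, hβ1⟩
  have herr : caputoAbsErr β = ∫ t in Set.Ioo (0:ℝ) 2, |Hfun β t| := caputoAbsErr_eq ⟨hβ0, hβ1⟩
  have step1 : (∫ t in Set.Ioo (1:ℝ) 2, |Hfun β t|) ≤ ∫ t in Set.Ioo (0:ℝ) 2, |Hfun β t| := by
    apply setIntegral_mono_set hint.abs
    · exact ae_of_all _ fun t => abs_nonneg _
    · exact HasSubset.Subset.eventuallyLE (Set.Ioo_subset_Ioo (by norm_num) le_rfl)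
  have step2 : -(∫ t in Set.Ioo (1:ℝ) 2, Hfun β t) ≤ ∫ t in Set.Ioo (1:ℝ) 2, |Hfun β t| := by
    have h := norm_integral_le_integral_norm (μ := volume.restrict (Set.Ioo (1:ℝ) 2))
      (f := Hfun β)
    simp only [Real.norm_eq_abs] at h
    calc -(∫ t in Set.Ioo (1:ℝ) 2, Hfun β t) ≤ |∫ t in Set.Ioo (1:ℝ) 2, Hfun β t| := neg_le_abs _
    _ ≤ _ := h
  have ia : IntervalIntegrable (fun t : ℝ => (t - 1) ^ β) volume 1 2 :=
    ((hcr.comp (continuous_id.sub continuous_const)).intervalIntegrable _ _)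
  have ib : IntervalIntegrable (fun t : ℝ => t ^ β) volume 1 2 := hcr.intervalIntegrable _ _
  have hval : (∫ t in Set.Ioo (1:ℝ) 2, Hfun β t)
      = (3 - 2 ^ (β + 1)) / Real.Gamma (β + 2) - 1 := by
    have hcongr : (∫ t in Set.Ioo (1:ℝ) 2, Hfun β t)
        = ∫ t in Set.Ioo (1:ℝ) 2,
            ((2 * (t - 1) ^ β - t ^ β) / Real.Gamma (β + 1) - 1) := by
      refine setIntegral_congr_fun measurableSet_Ioo fun t ht => ?_
      rw [Hfun, if_neg (not_le.mpr ht.1)]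
    rw [hcongr, ← integral_Ioc_eq_integral_Ioo,
      ← intervalIntegral.integral_of_le (by norm_num : (1:ℝ) ≤ 2)]
    have hsplit : (∫ t in (1:ℝ)..2, ((2 * (t - 1) ^ β - t ^ β) / Real.Gamma (β + 1) - 1))
        = (∫ t in (1:ℝ)..2, (2 * (t - 1) ^ β - t ^ β)) / Real.Gamma (β + 1) - 1 := by
      rw [intervalIntegral.integral_sub (((ia.const_mul 2).sub ib).div_const _)
        (intervalIntegrable_const), intervalIntegral.integral_div,
        intervalIntegral.integral_const]
      norm_num
    rw [hsplit, intervalIntegral.integral_sub (ia.const_mul 2) ib,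
      intervalIntegral.integral_const_mul]
    have v1 : (∫ t in (1:ℝ)..2, (t - 1) ^ β) = 1 / (β + 1) := by
      rw [intervalIntegral.integral_comp_sub_right (fun x => x ^ β) 1]
      norm_num
      rw [integral_rpow (Or.inl (by linarith : (-1:ℝ) < β))]
      rw [Real.one_rpow, Real.zero_rpow (by positivity), sub_zero, one_div]
    have v2 : (∫ t in (1:ℝ)..2, t ^ β) = (2 ^ (β + 1) - 1) / (β + 1) := by
      rw [integral_rpow (Or.inl (by linarith : (-1:ℝ) < β)), Real.one_rpow]
    rw [v1, v2, hΓ2]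
    have : (β + 1) ≠ 0 := by positivity
    field_simp
    ring
  calc (Real.Gamma (β + 2) - 3 + 2 ^ (β + 1)) / Real.Gamma (β + 2)
      = -((3 - 2 ^ (β + 1)) / Real.Gamma (β + 2) - 1) := by
        field_simp
        ring
    _ = -(∫ t in Set.Ioo (1:ℝ) 2, Hfun β t) := by rw [hval]
    _ ≤ ∫ t in Set.Ioo (1:ℝ) 2, |Hfun β t| := step2
    _ ≤ ∫ t in Set.Ioo (0:ℝ) 2, |Hfun β t| := step1
    _ = caputoAbsErr β := herr.symm

lemma sqrt_pi_le : Real.sqrt Real.pi ≤ 16/9 := by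
  have h : Real.pi ≤ (16/9:ℝ)^2 := by nlinarith [Real.pi_lt_d2]
  calc Real.sqrt Real.pi ≤ Real.sqrt ((16/9:ℝ)^2) := Real.sqrt_le_sqrt h
  _ = 16/9 := Real.sqrt_sq (by norm_num)

lemma gamma_bounds {β : ℝ} (hβ : β ∈ Set.Ioo (0:ℝ) 1) :
    1/3 ≤ Real.Gamma (β + 1) ∧ Real.Gamma (β + 1) ≤ 1 ∧ 1 - Real.Gamma (β + 1) ≤ 2 * β := by
  obtain ⟨hβ0, hβ1⟩ := hβ
  have hconv := Real.convexOn_Gamma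
  have hsq := sqrt_pi_le
  have hsq0 : (1:ℝ) ≤ Real.sqrt Real.pi := by
    rw [show (1:ℝ) = Real.sqrt 1 by simp]
    exact Real.sqrt_le_sqrt (by nlinarith [Real.pi_gt_three])
  have h12 : Real.Gamma (1/2) = Real.sqrt Real.pi := Real.Gamma_one_half_eq
  have h52 : Real.Gamma (5/2) = 3/4 * Real.sqrt Real.pi := by
    rw [show (5/2:ℝ) = 3/2 + 1 by norm_num, Real.Gamma_add_one (by norm_num),
      show (3/2:ℝ) = 1/2 + 1 by norm_num, Real.Gamma_add_one (by norm_num), h12]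
    ring
  have hub : Real.Gamma (β + 1) ≤ 1 := by
    have key := hconv.2 (Set.mem_Ioi.mpr one_pos) (Set.mem_Ioi.mpr two_pos)
      (by linarith : (0:ℝ) ≤ 1 - β) hβ0.le (by ring : (1 - β) + β = 1)
    rw [show ((1:ℝ) - β) • (1:ℝ) + β • (2:ℝ) = β + 1 by simp; ring] at key
    rw [Real.Gamma_one, Real.Gamma_two] at key
    simp only [smul_eq_mul, mul_one] at key
    linarith
  have hlb : 1/3 ≤ Real.Gamma (β + 1) := by
    have key := hconv.slope_mono_adjacent (Set.mem_Ioi.mpr (by linarith : (0:ℝ) < β + 1))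
      (Set.mem_Ioi.mpr (by norm_num : (0:ℝ) < 5/2))
      (by linarith : β + 1 < 2) (by norm_num : (2:ℝ) < 5/2)
    rw [Real.Gamma_two, h52] at key
    have h1 : (0:ℝ) < 2 - (β + 1) := by linarith
    rw [div_le_div_iff₀ h1 (by norm_num : (0:ℝ) < 5/2 - 2)] at key
    nlinarith
  have hnear : 1 - Real.Gamma (β + 1) ≤ 2 * β := by
    have key := hconv.slope_mono_adjacent (Set.mem_Ioi.mpr (by norm_num : (0:ℝ) < 1/2))
      (Set.mem_Ioi.mpr (by linarith : (0:ℝ) < β + 1))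
      (by norm_num : (1/2:ℝ) < 1) (by linarith : (1:ℝ) < β + 1)
    rw [Real.Gamma_one, h12] at key
    rw [div_le_div_iff₀ (by norm_num : (0:ℝ) < 1 - 1/2) (by linarith : (0:ℝ) < β + 1 - 1)] at key
    nlinarith
  exact ⟨hlb, hub, hnear⟩

lemma rpow_le_one_add {t β : ℝ} (ht1 : 1 ≤ t) (ht2 : t ≤ 2) (hβ0 : 0 ≤ β) (hβ1 : β ≤ 1) :
    t ^ β - 1 ≤ 2 * β := by
  have ht0 : (0:ℝ) < t := by linarith
  rw [Real.rpow_def_of_pos ht0]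
  set x := Real.log t * β with hx
  have hlt : 0 ≤ Real.log t := Real.log_nonneg ht1
  have hlt2 : Real.log t ≤ 1 := by
    have := Real.log_le_sub_one_of_pos ht0
    linarith
  have hx0 : 0 ≤ x := mul_nonneg hlt hβ0
  have hxβ : x ≤ β := by nlinarith
  have hxlog2 : x ≤ Real.log 2 := by
    have h2 : Real.log t ≤ Real.log 2 := Real.log_le_log ht0 ht2
    nlinarith [Real.log_nonneg (by norm_num : (1:ℝ) ≤ 2)]
  have hexp2 : Real.exp x ≤ 2 := by
    calc Real.exp x ≤ Real.exp (Real.log 2) := Real.exp_le_exp.mpr hxlog2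
    _ = 2 := Real.exp_log (by norm_num)
  have hkey : Real.exp x - 1 ≤ x * Real.exp x := by
    have h1 := Real.add_one_le_exp (-x)
    rw [Real.exp_neg] at h1
    have h2 := Real.exp_pos x
    have h3 := mul_le_mul_of_nonneg_right h1 h2.le
    rw [inv_mul_cancel₀ h2.ne'] at h3
    nlinarith
  nlinarith [Real.exp_pos x]

lemma caputo_err_ub {β : ℝ} (hβ : β ∈ Set.Ioo (0:ℝ) 1) : caputoAbsErr β ≤ 27 * β := by
  obtain ⟨hβ0, hβ1⟩ := hβ
  obtain ⟨hΓlb, hΓub, hΓnear⟩ := gamma_bounds ⟨hβ0, hβ1⟩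
  have hΓpos : (0:ℝ) < Real.Gamma (β + 1) := by linarith
  have hcr : Continuous fun t : ℝ => t ^ β := Real.continuous_rpow_const hβ0.le
  have hint := Hfun_integrableOn ⟨hβ0, hβ1⟩
  have herr : caputoAbsErr β = ∫ t in Set.Ioo (0:ℝ) 2, |Hfun β t| := caputoAbsErr_eq ⟨hβ0, hβ1⟩
  have hintabs : IntegrableOn (fun t => |Hfun β t|) (Set.Ioo (0:ℝ) 2) volume := hint.abs
  have hint1 : IntegrableOn (fun t => |Hfun β t|) (Set.Ioc (0:ℝ) 1) volume :=
    hintabs.mono_set (fun x hx => ⟨hx.1, by linarith [hx.2]⟩)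
  have hint2 : IntegrableOn (fun t => |Hfun β t|) (Set.Ioc (1:ℝ) 2) volume := by
    have h2 : IntegrableOn (fun t => |Hfun β t|) (Set.Ioo (1:ℝ) 2) volume :=
      hintabs.mono_set (fun x hx => ⟨by linarith [hx.1], hx.2⟩)
    rwa [← integrableOn_Ioc_iff_integrableOn_Ioo] at h2
  have hsplit : (∫ t in Set.Ioo (0:ℝ) 2, |Hfun β t|)
      = (∫ t in Set.Ioc (0:ℝ) 1, |Hfun β t|) + ∫ t in Set.Ioc (1:ℝ) 2, |Hfun β t| := by
    rw [← integral_Ioc_eq_integral_Ioo, ← Set.Ioc_union_Ioc_eq_Ioc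
      (by norm_num : (0:ℝ) ≤ 1) (by norm_num : (1:ℝ) ≤ 2)]
    exact setIntegral_union (Set.Ioc_disjoint_Ioc_of_le le_rfl) measurableSet_Ioc hint1 hint2
  have hb1 : ∀ t ∈ Set.Ioc (0:ℝ) 1, |Hfun β t| ≤ 3 * (1 - t ^ β) + 6 * β := by
    intro t ht
    have hu1 : t ^ β ≤ 1 := Real.rpow_le_one ht.1.le ht.2 hβ0.le
    have hu0 : (0:ℝ) ≤ t ^ β := Real.rpow_nonneg ht.1.le β
    rw [Hfun, if_pos ht.2, show 1 - t ^ β / Real.Gamma (β + 1)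
      = (Real.Gamma (β + 1) - t ^ β) / Real.Gamma (β + 1) by field_simp, abs_div,
      abs_of_pos hΓpos]
    have habs : |Real.Gamma (β + 1) - t ^ β| ≤ (1 - t ^ β) + 2 * β :=
      abs_le.mpr ⟨by linarith, by linarith⟩
    calc |Real.Gamma (β + 1) - t ^ β| / Real.Gamma (β + 1)
        ≤ |Real.Gamma (β + 1) - t ^ β| / (1/3) :=
          div_le_div_of_nonneg_left (abs_nonneg _) (by norm_num) hΓlb
      _ = 3 * |Real.Gamma (β + 1) - t ^ β| := by ring
      _ ≤ 3 * ((1 - t ^ β) + 2 * β) := by linarith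
      _ = 3 * (1 - t ^ β) + 6 * β := by ring
  have hb2 : ∀ t ∈ Set.Ioc (1:ℝ) 2, |Hfun β t| ≤ 6 * (1 - (t - 1) ^ β) + 12 * β := by
    intro t ht
    have hu1 : (t - 1) ^ β ≤ 1 := Real.rpow_le_one (by linarith [ht.1]) (by linarith [ht.2]) hβ0.le
    have hu0 : (0:ℝ) ≤ (t - 1) ^ β := Real.rpow_nonneg (by linarith [ht.1]) β
    have hv1 : (1:ℝ) ≤ t ^ β := by
      rw [show (1:ℝ) = 1 ^ β by rw [Real.one_rpow]]
      exact Real.rpow_le_rpow (by norm_num) ht.1.le hβ0.le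
    have hv2 : t ^ β - 1 ≤ 2 * β := rpow_le_one_add ht.1.le ht.2 hβ0.le hβ1.le
    rw [Hfun, if_neg (not_le.mpr ht.1), show (2 * (t - 1) ^ β - t ^ β) / Real.Gamma (β + 1) - 1
      = (2 * (t - 1) ^ β - t ^ β - Real.Gamma (β + 1)) / Real.Gamma (β + 1) by
        field_simp, abs_div, abs_of_pos hΓpos]
    have habs : |2 * (t - 1) ^ β - t ^ β - Real.Gamma (β + 1)|
        ≤ 2 * (1 - (t - 1) ^ β) + (t ^ β - 1) + (1 - Real.Gamma (β + 1)) :=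
      abs_le.mpr ⟨by linarith, by linarith⟩
    calc |2 * (t - 1) ^ β - t ^ β - Real.Gamma (β + 1)| / Real.Gamma (β + 1)
        ≤ |2 * (t - 1) ^ β - t ^ β - Real.Gamma (β + 1)| / (1/3) :=
          div_le_div_of_nonneg_left (abs_nonneg _) (by norm_num) hΓlb
      _ = 3 * |2 * (t - 1) ^ β - t ^ β - Real.Gamma (β + 1)| := by ring
      _ ≤ 3 * (2 * (1 - (t - 1) ^ β) + 2 * β + 2 * β) := by linarith
      _ ≤ 6 * (1 - (t - 1) ^ β) + 12 * β := by linarith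
  have ival1 : (∫ t in Set.Ioc (0:ℝ) 1, (3 * (1 - t ^ β) + 6 * β)) ≤ 9 * β := by
    have : (∫ t in Set.Ioc (0:ℝ) 1, (3 * (1 - t ^ β) + 6 * β))
        = ∫ t in (0:ℝ)..1, (3 * (1 - t ^ β) + 6 * β) := by
      rw [intervalIntegral.integral_of_le (by norm_num : (0:ℝ) ≤ 1)]
    rw [this]
    have hieq : ∀ t : ℝ, 3 * (1 - t ^ β) + 6 * β = (3 + 6 * β) - 3 * t ^ β := fun t => by ring
    simp only [hieq]
    rw [intervalIntegral.integral_sub intervalIntegrable_const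
      (show IntervalIntegrable (fun t : ℝ => 3 * t ^ β) volume 0 1 from
        (continuous_const.mul hcr).intervalIntegrable _ _),
      intervalIntegral.integral_const, intervalIntegral.integral_const_mul,
      integral_rpow (Or.inl (by linarith : (-1:ℝ) < β)), Real.one_rpow,
      Real.zero_rpow (by positivity : β + 1 ≠ 0)]
    simp only [smul_eq_mul, sub_zero]
    have h1 : (0:ℝ) < β + 1 := by linarith
    have h2 : 3 - 3 * β ≤ 3 / (β + 1) := by
      rw [le_div_iff₀ h1]; nlinarith
    have h3 : 3 / (β + 1) = 3 * (1 / (β + 1)) := by ring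
    nlinarith [h2]
  have ival2 : (∫ t in Set.Ioc (1:ℝ) 2, (6 * (1 - (t - 1) ^ β) + 12 * β)) ≤ 18 * β := by
    have : (∫ t in Set.Ioc (1:ℝ) 2, (6 * (1 - (t - 1) ^ β) + 12 * β))
        = ∫ t in (1:ℝ)..2, (6 * (1 - (t - 1) ^ β) + 12 * β) := by
      rw [intervalIntegral.integral_of_le (by norm_num : (1:ℝ) ≤ 2)]
    rw [this]
    have hieq : ∀ t : ℝ, 6 * (1 - (t-1) ^ β) + 12 * β = (6 + 12 * β) - 6 * (t-1) ^ β :=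
      fun t => by ring
    simp only [hieq]
    have hc2 : Continuous fun t : ℝ => (t - 1) ^ β := hcr.comp (continuous_id.sub continuous_const)
    rw [intervalIntegral.integral_sub intervalIntegrable_const
      (show IntervalIntegrable (fun t : ℝ => 6 * (t - 1) ^ β) volume 1 2 from
        (continuous_const.mul hc2).intervalIntegrable _ _),
      intervalIntegral.integral_const, intervalIntegral.integral_const_mul,
      intervalIntegral.integral_comp_sub_right (fun x => x ^ β) 1]
    norm_num
    rw [integral_rpow (Or.inl (by linarith : (-1:ℝ) < β)), Real.one_rpow,
      Real.zero_rpow (by positivity : β + 1 ≠ 0)]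
    have h1 : (0:ℝ) < β + 1 := by linarith
    have h2 : 6 - 6 * β ≤ 6 / (β + 1) := by
      rw [le_div_iff₀ h1]; nlinarith
    have h3 : 6 * ((1 - 0) / (β + 1)) = 6 / (β + 1) := by ring
    nlinarith [h2, h3]
  have m1 : (∫ t in Set.Ioc (0:ℝ) 1, |Hfun β t|)
      ≤ ∫ t in Set.Ioc (0:ℝ) 1, (3 * (1 - t ^ β) + 6 * β) := by
    have hcb : Continuous fun t : ℝ => 3 * (1 - t ^ β) + 6 * β :=
      (continuous_const.mul (continuous_const.sub hcr)).add continuous_const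
    exact setIntegral_mono_on hint1
      ((ContinuousOn.integrableOn_compact isCompact_Icc hcb.continuousOn).mono_set
        Set.Ioc_subset_Icc_self) measurableSet_Ioc hb1
  have m2 : (∫ t in Set.Ioc (1:ℝ) 2, |Hfun β t|)
      ≤ ∫ t in Set.Ioc (1:ℝ) 2, (6 * (1 - (t - 1) ^ β) + 12 * β) := by
    have hc2 : Continuous fun t : ℝ => (t - 1) ^ β := hcr.comp (continuous_id.sub continuous_const)
    have hcb : Continuous fun t : ℝ => 6 * (1 - (t - 1) ^ β) + 12 * β :=
      (continuous_const.mul (continuous_const.sub hc2)).add continuous_const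
    exact setIntegral_mono_on hint2
      ((ContinuousOn.integrableOn_compact isCompact_Icc hcb.continuousOn).mono_set
        Set.Ioc_subset_Icc_self) measurableSet_Ioc hb2
  calc caputoAbsErr β = _ := herr
    _ = _ := hsplit
    _ ≤ 9 * β + 18 * β := add_le_add (m1.trans ival1) (m2.trans ival2)
    _ = 27 * β := by ring

lemma two_ne_neg_nat : ∀ m : ℕ, (2:ℝ) ≠ -m := by
  intro m h
  have : (0:ℝ) ≤ (m:ℝ) := Nat.cast_nonneg m
  linarith

lemma gamma_deriv_two : deriv Real.Gamma 2 = 1 - Real.eulerMascheroniConstant := by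
  have h := Real.deriv_Gamma_nat 1
  norm_num [harmonic_succ, harmonic_zero] at h
  rw [h]; ring

lemma gamma_deriv_pos : 0 < deriv Real.Gamma 2 + 2 * Real.log 2 := by
  rw [gamma_deriv_two]
  have h1 := Real.eulerMascheroniConstant_lt_two_thirds
  have h2 : 0 < Real.log 2 := Real.log_pos (by norm_num)
  linarith

lemma caputo_liminf :
    deriv Real.Gamma 2 + 2 * Real.log 2 ≤
      Filter.liminf (fun β : ℝ => caputoAbsErr β / β) (nhdsWithin 0 (Set.Ioi 0)) := by
  set L := deriv Real.Gamma 2 + 2 * Real.log 2 with hL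
  set f : ℝ → ℝ := fun β => (Real.Gamma (β+2) - 3 + 2^(β+1)) / Real.Gamma (β+2) with hfdef
  have hG : HasDerivAt (fun β : ℝ => Real.Gamma (β + 2)) (deriv Real.Gamma 2) 0 := by
    have hd : HasDerivAt Real.Gamma (deriv Real.Gamma 2) 2 :=
      (Real.differentiableAt_Gamma two_ne_neg_nat).hasDerivAt
    have hd2 : HasDerivAt Real.Gamma (deriv Real.Gamma 2) (id (0:ℝ) + 2) := by simpa using hd
    have := hd2.comp_add_const (0:ℝ) 2
    simpa using this
  have hP : HasDerivAt (fun β : ℝ => (2:ℝ) ^ (β + 1)) (2 * Real.log 2) 0 := by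
    have h := (Real.hasStrictDerivAt_const_rpow (by norm_num : (0:ℝ) < 2) 1).hasDerivAt
    have h2 : HasDerivAt (fun x : ℝ => (2:ℝ) ^ x) ((2:ℝ) ^ (1:ℝ) * Real.log 2) (id (0:ℝ) + 1) := by
      simpa using h
    have := h2.comp_add_const (0:ℝ) 1
    simpa [Real.rpow_one] using this
  have hN : HasDerivAt (fun β : ℝ => Real.Gamma (β+2) - 3 + 2^(β+1)) L 0 :=
    (hG.sub_const 3).add hP
  have hG0 : Real.Gamma ((0:ℝ) + 2) = 1 := by norm_num [Real.Gamma_two]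
  have hf : HasDerivAt f L 0 := by
    have h := hN.div hG (by rw [hG0]; norm_num)
    refine h.congr_deriv ?_
    rw [hG0]
    norm_num [Real.rpow_one]
  have hf0 : f 0 = 0 := by
    simp only [hfdef, hG0, Real.rpow_one]
    norm_num
  have hslope : Tendsto (fun β => f β / β) (nhdsWithin 0 (Set.Ioi 0)) (nhds L) := by
    have h1 := hasDerivAt_iff_tendsto_slope.mp hf
    have h2 := h1.mono_left (nhdsWithin_mono _ (fun x (hx : x ∈ Set.Ioi 0) => ne_of_gt hx))
    refine h2.congr' ?_
    filter_upwards [self_mem_nhdsWithin] with x hx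
    rw [slope_def_field, hf0, sub_zero, sub_zero]
  have hev : ∀ᶠ β in nhdsWithin (0:ℝ) (Set.Ioi 0), f β / β ≤ caputoAbsErr β / β := by
    filter_upwards [Ioo_mem_nhdsGT_of_mem (Set.left_mem_Ico.mpr one_pos)] with β hβ
    have hb : (0:ℝ) < β := hβ.1
    exact div_le_div_of_nonneg_right (caputo_err_lb hβ) hb.le
  have hb1 : IsBoundedUnder (· ≥ ·) (nhdsWithin (0:ℝ) (Set.Ioi 0)) (fun β => f β / β) :=
    hslope.isBoundedUnder_ge
  haveI : (nhdsWithin (0:ℝ) (Set.Ioi 0)).NeBot := nhdsGT_neBot 0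
  have hb2 : IsCoboundedUnder (· ≥ ·) (nhdsWithin (0:ℝ) (Set.Ioi 0))
      (fun β => caputoAbsErr β / β) := by
    apply isCoboundedUnder_ge_of_eventually_le (nhdsWithin (0:ℝ) (Set.Ioi 0)) (x := 27)
    filter_upwards [Ioo_mem_nhdsGT_of_mem (Set.left_mem_Ico.mpr one_pos)] with β hβ
    rw [div_le_iff₀ hβ.1]
    exact (caputo_err_ub hβ).trans_eq (by ring)
  calc L = Filter.liminf (fun β => f β / β) (nhdsWithin 0 (Set.Ioi 0)) := hslope.liminf_eq.symm
    _ ≤ _ := liminf_le_liminf hev hb1 hb2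

/-- For `g(t) = |t-1|` on `[0,2]`: the explicit formula for `ᶜ₀D^{1-β}g` on
`(0,1]` and `(1,2]`, the lower bound
`E_{g,1}(β) ≥ (Γ(β+2) - 3 + 2^{β+1})/Γ(β+2)`, and consequently
`liminf_{β→0⁺} E_{g,1}(β)/β ≥ Γ'(2) + 2 ln 2 > 0`. -/
theorem caputo_abs_error :
    (∀ β ∈ Set.Ioo (0 : ℝ) 1,
        (∀ t ∈ Set.Ioc (0 : ℝ) 1,
            caputoD 0 (1 - β) absDeriv t = -(t ^ β) / Real.Gamma (β + 1)) ∧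
        (∀ t ∈ Set.Ioc (1 : ℝ) 2,
            caputoD 0 (1 - β) absDeriv t =
              (2 * (t - 1) ^ β - t ^ β) / Real.Gamma (β + 1)) ∧
        (Real.Gamma (β + 2) - 3 + 2 ^ (β + 1)) / Real.Gamma (β + 2) ≤
          caputoAbsErr β) ∧
    deriv Real.Gamma 2 + 2 * Real.log 2 ≤
      Filter.liminf (fun β : ℝ => caputoAbsErr β / β) (nhdsWithin 0 (Set.Ioi 0)) ∧
    0 < deriv Real.Gamma 2 + 2 * Real.log 2 := by
  refine ⟨fun β hβ => ⟨fun t ht => caputo_left hβ ht, fun t ht => caputo_right hβ ht,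
    caputo_err_lb hβ⟩, caputo_liminf, gamma_deriv_pos⟩
end

section
/- Let m ∈ ℕ with m ≥ 2, let 0 < T ≤ m−1, let g(t) = t^m on [0,T], and let β ∈ (0,1). Then the L¹ errors of the Caputo–Fabrizio and Caputo fractional derivatives of order 1−β with base point 0 are given explicitly by: (i) ‖ᶜᶠ₀D^{1−β}g − g'‖_{L¹(0,T)} = (T^m/(1−β))·(Γ(m+1)·E_{1,m+1}(−((1−β)/β)·T) − β), where E_{1,m+1} is the Mittag-Leffler function; and (ii) ‖ᶜ₀D^{1−β}g − g'‖_{L¹(0,T)} = T^m·(Γ(m+β+1) − Γ(m+1)·T^β)/Γ(m+β+1). -/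
open MeasureTheory Filter Set

/-- Caputo–Fabrizio fractional derivative of order `α` with base point `a`,
expressed in terms of the derivative `g'`. -/
noncomputable def cfD (a α : ℝ) (g' : ℝ → ℝ) (t : ℝ) : ℝ :=
  (1 / (1 - α)) * ∫ τ in a..t, g' τ * Real.exp (-(α / (1 - α)) * (t - τ))

/-- Mittag-Leffler function `E_{ρ,ω}(t) = ∑_{k≥0} t^k / Γ(ρk + ω)`. -/
noncomputable def mittagLeffler (ρ ω t : ℝ) : ℝ :=
  ∑' k : ℕ, t ^ k / Real.Gamma (ρ * (k : ℝ) + ω)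

open intervalIntegral in
lemma real_beta {a b : ℝ} (ha : 0 < a) (hb : 0 < b) :
    ∫ x in (0:ℝ)..1, x ^ (a-1) * (1-x) ^ (b-1)
      = Real.Gamma a * Real.Gamma b / Real.Gamma (a+b) := by
  have h := Complex.Gamma_mul_Gamma_eq_betaIntegral (s := (a:ℂ)) (t := (b:ℂ))
    (by simpa using ha) (by simpa using hb)
  have hofreal : Complex.betaIntegral (a:ℂ) (b:ℂ)
      = ((∫ x in (0:ℝ)..1, x ^ (a-1) * (1-x) ^ (b-1) : ℝ) : ℂ) := by
    rw [Complex.betaIntegral, ← intervalIntegral.integral_ofReal]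
    apply intervalIntegral.integral_congr
    intro x hx
    rw [Set.uIcc_of_le (by norm_num : (0:ℝ) ≤ 1)] at hx
    have hx0 : (0:ℝ) ≤ x := hx.1
    have hx1 : (0:ℝ) ≤ 1 - x := by linarith [hx.2]
    show (x:ℂ) ^ ((a:ℂ)-1) * ((1:ℂ)-(x:ℂ)) ^ ((b:ℂ)-1)
        = ((x ^ (a-1) * (1-x) ^ (b-1) : ℝ) : ℂ)
    rw [show ((a:ℂ)-1) = ((a-1:ℝ):ℂ) by push_cast; ring,
      show ((b:ℂ)-1) = ((b-1:ℝ):ℂ) by push_cast; ring,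
      show ((1:ℂ) - (x:ℂ)) = ((1-x:ℝ):ℂ) by push_cast; ring,
      ← Complex.ofReal_cpow hx0, ← Complex.ofReal_cpow hx1, ← Complex.ofReal_mul]
  rw [hofreal] at h
  have hG : Complex.Gamma ((a:ℂ)+(b:ℂ)) = ((Real.Gamma (a+b) : ℝ) : ℂ) := by
    rw [← Complex.ofReal_add, Complex.Gamma_ofReal]
  rw [Complex.Gamma_ofReal, Complex.Gamma_ofReal, hG] at h
  have h2 : Real.Gamma a * Real.Gamma b
      = Real.Gamma (a+b) * ∫ x in (0:ℝ)..1, x ^ (a-1) * (1-x) ^ (b-1) := by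
    exact_mod_cast h
  have hne : Real.Gamma (a+b) ≠ 0 := (Real.Gamma_pos_of_pos (by linarith)).ne'
  rw [h2]
  field_simp

open intervalIntegral in
lemma beta_scaled {a b t : ℝ} (ha : 0 < a) (hb : 0 < b) (ht : 0 < t) :
    ∫ τ in (0:ℝ)..t, τ ^ (a-1) * (t-τ) ^ (b-1)
      = Real.Gamma a * Real.Gamma b / Real.Gamma (a+b) * t ^ (a+b-1) := by
  have hsub := intervalIntegral.integral_comp_mul_left
    (a := (0:ℝ)) (b := 1) (fun τ => τ ^ (a-1) * (t-τ) ^ (b-1)) (ne_of_gt ht)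
  simp only [mul_zero, mul_one] at hsub
  have hcong : ∫ x in (0:ℝ)..1, (t*x) ^ (a-1) * (t - t*x) ^ (b-1)
      = ∫ x in (0:ℝ)..1, t ^ (a+b-2) * (x ^ (a-1) * (1-x) ^ (b-1)) := by
    apply intervalIntegral.integral_congr
    intro x hx
    rw [Set.uIcc_of_le (by norm_num : (0:ℝ) ≤ 1)] at hx
    have hx0 : (0:ℝ) ≤ x := hx.1
    have hx1 : (0:ℝ) ≤ 1 - x := by linarith [hx.2]
    show (t*x) ^ (a-1) * (t - t*x) ^ (b-1) = t ^ (a+b-2) * (x ^ (a-1) * (1-x) ^ (b-1))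
    rw [show t - t*x = t*(1-x) by ring, Real.mul_rpow ht.le hx0,
      Real.mul_rpow ht.le hx1,
      show t ^ (a-1) * x ^ (a-1) * (t ^ (b-1) * (1-x) ^ (b-1))
        = t ^ (a-1) * t ^ (b-1) * (x ^ (a-1) * (1-x) ^ (b-1)) by ring,
      ← Real.rpow_add ht, show a - 1 + (b - 1) = a + b - 2 by ring]
  rw [hcong, intervalIntegral.integral_const_mul, real_beta ha hb] at hsub
  rw [smul_eq_mul] at hsub
  have ht' : t ≠ 0 := ht.ne'
  have hI : (∫ (x : ℝ) in (0:ℝ)..t, x ^ (a - 1) * (t - x) ^ (b - 1))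
      = t * (t ^ (a + b - 2) * (Real.Gamma a * Real.Gamma b / Real.Gamma (a + b))) := by
    rw [hsub, ← mul_assoc, mul_inv_cancel₀ ht', one_mul]
  have hp : t * t ^ (a+b-2) = t ^ (a+b-1) := by
    rw [show a+b-1 = 1+(a+b-2) by ring, Real.rpow_add ht, Real.rpow_one]
  rw [hI, ← mul_assoc, hp]
  ring

open intervalIntegral in
lemma gamma_conv_bound {c β : ℝ} (hc : 1 < c) (hβ0 : 0 < β) (hβ1 : β < 1) :
    Real.Gamma c * (c + β - 1) ^ β ≤ Real.Gamma (c + β) := by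
  have h1 : (0:ℝ) < c + β - 1 := by linarith
  have h2 : (0:ℝ) < c + β := by linarith
  have hx : (c + β - 1) ∈ Ioi (0:ℝ) := h1
  have hy : (c + β) ∈ Ioi (0:ℝ) := h2
  have hcomb : β • (c + β - 1) + (1 - β) • (c + β) = c := by
    simp only [smul_eq_mul]; ring
  have hconv := Real.convexOn_log_Gamma.2 hx hy hβ0.le (show (0:ℝ) ≤ 1 - β by linarith) (show β + (1-β) = 1 by ring)
  rw [hcomb] at hconv
  simp only [Function.comp_apply, smul_eq_mul] at hconv
  have hGc : 0 < Real.Gamma c := Real.Gamma_pos_of_pos (by linarith)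
  have hG1 : 0 < Real.Gamma (c + β - 1) := Real.Gamma_pos_of_pos h1
  have hG2 : 0 < Real.Gamma (c + β) := Real.Gamma_pos_of_pos h2
  have hexp : Real.Gamma c ≤ Real.Gamma (c+β-1) ^ β * Real.Gamma (c+β) ^ (1-β) := by
    have := Real.exp_le_exp.mpr hconv
    rw [Real.exp_log hGc, Real.exp_add] at this
    rw [Real.rpow_def_of_pos hG1, Real.rpow_def_of_pos hG2, mul_comm (Real.log _),
      mul_comm (Real.log _)]
    exact this
  have hrec : Real.Gamma (c + β) = (c + β - 1) * Real.Gamma (c + β - 1) := by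
    have := Real.Gamma_add_one (ne_of_gt h1)
    rw [show c + β - 1 + 1 = c + β by ring] at this
    exact this
  have hG1' : Real.Gamma (c+β-1) = Real.Gamma (c+β) / (c+β-1) := by
    rw [hrec]; field_simp
  rw [hG1', Real.div_rpow hG2.le h1.le] at hexp
  have hkey : Real.Gamma (c+β) ^ β * Real.Gamma (c+β) ^ (1-β) = Real.Gamma (c+β) := by
    rw [← Real.rpow_add hG2]; norm_num
  have hpow : 0 < (c + β - 1) ^ β := Real.rpow_pos_of_pos h1 β
  calc Real.Gamma c * (c + β - 1) ^ β
      ≤ (Real.Gamma (c+β) ^ β / (c+β-1) ^ β * Real.Gamma (c+β) ^ (1-β)) * (c+β-1) ^ β := by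
        apply mul_le_mul_of_nonneg_right hexp hpow.le
    _ = Real.Gamma (c+β) ^ β * Real.Gamma (c+β) ^ (1-β) := by field_simp
    _ = Real.Gamma (c+β) := hkey

open intervalIntegral in
lemma sign_bound (m : ℕ) (hm : 2 ≤ m) (β : ℝ) (hβ0 : 0 < β) (hβ1 : β < 1)
    (t : ℝ) (ht0 : 0 < t) (htm : t ≤ (m:ℝ) - 1) :
    (∫ τ in (0:ℝ)..t, ((m:ℝ) * τ ^ (m-1)) * Real.exp (-((1-β)/β)*(t-τ)))
      ≤ β * ((m:ℝ) * t ^ (m-1)) := by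
  set l : ℝ := (1-β)/β with hldef
  have hl : 0 < l := div_pos (by linarith) hβ0
  have hm1 : (1:ℝ) ≤ (m:ℝ) - 1 := by
    have : (2:ℝ) ≤ (m:ℝ) := by exact_mod_cast hm
    linarith
  set μ : ℝ := l + ((m:ℝ)-1)/t with hμdef
  have hμl1 : l + 1 ≤ μ := by
    have : (1:ℝ) ≤ ((m:ℝ)-1)/t := (one_le_div ht0).mpr htm
    simp only [hμdef]; linarith
  have hμ : 0 < μ := by linarith
  have hβμ : 1/μ ≤ β := by
    have hl1 : l + 1 = 1/β := by rw [hldef]; field_simp; ring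
    calc 1/μ ≤ 1/(l+1) := by apply one_div_le_one_div_of_le (by linarith) hμl1
    _ = β := by rw [hl1]; simp
  have hcast : ((m-1 : ℕ) : ℝ) = (m:ℝ) - 1 := by
    push_cast [Nat.cast_sub (by omega : 1 ≤ m)]; ring
  -- pointwise bound
  have hptw : ∀ τ ∈ Icc (0:ℝ) t,
      ((m:ℝ) * τ ^ (m-1)) * Real.exp (-l*(t-τ))
        ≤ ((m:ℝ) * t ^ (m-1)) * Real.exp (-μ*(t-τ)) := by
    intro τ hτ
    have hτ0 : 0 ≤ τ := hτ.1
    have hτt : τ ≤ t := hτ.2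
    have hkey : τ ^ (m-1) ≤ t ^ (m-1) * Real.exp (-(((m:ℝ)-1)/t)*(t-τ)) := by
      have h1 : τ ≤ t * Real.exp (-(t-τ)/t) := by
        have := Real.add_one_le_exp (τ/t - 1)
        have h2 : τ/t ≤ Real.exp (τ/t - 1) := by linarith
        have h3 : τ/t - 1 = -(t-τ)/t := by field_simp; ring
        calc τ = t * (τ/t) := by field_simp
        _ ≤ t * Real.exp (τ/t - 1) := by nlinarith
        _ = t * Real.exp (-(t-τ)/t) := by rw [h3]
      calc τ ^ (m-1) ≤ (t * Real.exp (-(t-τ)/t)) ^ (m-1) := by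
            apply pow_le_pow_left₀ hτ0 h1 _
      _ = t ^ (m-1) * (Real.exp (-(t-τ)/t)) ^ (m-1) := by rw [mul_pow]
      _ = t ^ (m-1) * Real.exp (((m-1:ℕ):ℝ) * (-(t-τ)/t)) := by
            rw [Real.exp_nat_mul]
      _ = t ^ (m-1) * Real.exp (-(((m:ℝ)-1)/t)*(t-τ)) := by
            rw [hcast]; congr 1; field_simp
    have hexpsplit : Real.exp (-μ*(t-τ))
        = Real.exp (-(((m:ℝ)-1)/t)*(t-τ)) * Real.exp (-l*(t-τ)) := by
      rw [← Real.exp_add]; congr 1; rw [hμdef]; ring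
    rw [hexpsplit]
    have he1 : 0 < Real.exp (-l*(t-τ)) := Real.exp_pos _
    have he2 : 0 < Real.exp (-(((m:ℝ)-1)/t)*(t-τ)) := Real.exp_pos _
    calc ((m:ℝ) * τ ^ (m-1)) * Real.exp (-l*(t-τ))
        ≤ ((m:ℝ) * (t ^ (m-1) * Real.exp (-(((m:ℝ)-1)/t)*(t-τ)))) * Real.exp (-l*(t-τ)) := by
          have hm0 : (0:ℝ) ≤ (m:ℝ) := Nat.cast_nonneg m
          exact mul_le_mul_of_nonneg_right
            (mul_le_mul_of_nonneg_left hkey hm0) he1.le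
    _ = (m:ℝ) * t ^ (m-1) * (Real.exp (-(((m:ℝ)-1)/t)*(t-τ)) * Real.exp (-l*(t-τ))) := by ring
  have hexpc : ∀ c : ℝ, Continuous fun τ : ℝ => Real.exp (-c*(t-τ)) := fun c =>
    Real.continuous_exp.comp (continuous_const.mul (continuous_const.sub continuous_id))
  have hcμ : Continuous fun τ : ℝ => ((m:ℝ) * t ^ (m-1)) * Real.exp (-μ*(t-τ)) :=
    continuous_const.mul (hexpc μ)
  have hcl : Continuous fun τ : ℝ => ((m:ℝ) * τ ^ (m-1)) * Real.exp (-l*(t-τ)) :=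
    (continuous_const.mul (continuous_pow _)).mul (hexpc l)
  -- FTC for right integrand
  have hFTC : (∫ τ in (0:ℝ)..t, ((m:ℝ) * t ^ (m-1)) * Real.exp (-μ*(t-τ)))
      = ((m:ℝ) * t ^ (m-1)) * ((1 - Real.exp (-μ*t))/μ) := by
    have hd : ∀ τ : ℝ, HasDerivAt (fun τ => ((m:ℝ) * t ^ (m-1)) * Real.exp (-μ*(t-τ)) / μ)
        (((m:ℝ) * t ^ (m-1)) * Real.exp (-μ*(t-τ))) τ := by
      intro τ
      have h1 : HasDerivAt (fun τ : ℝ => -μ*(t-τ)) μ τ := by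
        have := ((hasDerivAt_id τ).const_sub t).const_mul (-μ)
        refine this.congr_deriv ?_
        ring
      have h2 := (Real.hasDerivAt_exp (-μ*(t-τ))).comp τ h1
      have h3 := (h2.const_mul ((m:ℝ) * t ^ (m-1))).div_const μ
      refine h3.congr_deriv ?_
      field_simp
    rw [intervalIntegral.integral_eq_sub_of_hasDerivAt (fun τ _ => hd τ)
      (hcμ.intervalIntegrable _ _)]
    simp only [sub_self, mul_zero, sub_zero, Real.exp_zero]
    field_simp
  have hmono := intervalIntegral.integral_mono_on (μ := volume) ht0.le
    (hcl.intervalIntegrable _ _) (hcμ.intervalIntegrable _ _)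
    hptw
  have hfinal : ((m:ℝ) * t ^ (m-1)) * ((1 - Real.exp (-μ*t))/μ) ≤ β * ((m:ℝ) * t ^ (m-1)) := by
    have hmt : 0 ≤ (m:ℝ) * t ^ (m-1) := by positivity
    have h1 : (1 - Real.exp (-μ*t))/μ ≤ 1/μ := by
      gcongr
      linarith [Real.exp_pos (-μ*t)]
    nlinarith [hβμ.trans_eq rfl, h1]
  calc (∫ τ in (0:ℝ)..t, ((m:ℝ) * τ ^ (m-1)) * Real.exp (-l*(t-τ)))
      ≤ ∫ τ in (0:ℝ)..t, ((m:ℝ) * t ^ (m-1)) * Real.exp (-μ*(t-τ)) := hmono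
  _ = ((m:ℝ) * t ^ (m-1)) * ((1 - Real.exp (-μ*t))/μ) := hFTC
  _ ≤ β * ((m:ℝ) * t ^ (m-1)) := hfinal

open intervalIntegral in
lemma series_val (m : ℕ) (hm : 2 ≤ m) (T : ℝ) (hT0 : 0 < T) (l : ℝ) (hl : 0 < l) :
    (∫ τ in Set.Ioo (0:ℝ) T, (m:ℝ) * τ ^ (m-1) * Real.exp (-l*(T-τ)))
      = Real.Gamma ((m:ℝ)+1) * mittagLeffler 1 ((m:ℝ)+1) (-l*T) * T^m := by
  have hcast : ((m-1 : ℕ) : ℝ) = (m:ℝ) - 1 := by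
    push_cast [Nat.cast_sub (by omega : 1 ≤ m)]; ring
  have hm0 : (0:ℝ) < (m:ℝ) := by positivity
  -- the basic beta integral for natural exponents
  have hJ : ∀ k : ℕ, (∫ τ in Set.Ioo (0:ℝ) T, τ^(m-1)*(T-τ)^k)
      = (Nat.factorial (m-1) : ℝ) * (Nat.factorial k : ℝ) / (Nat.factorial (m+k) : ℝ) * T^(m+k) := by
    intro k
    have hb := beta_scaled (a := (m:ℝ)) (b := (k:ℝ)+1) hm0 (by positivity) hT0
    have hcong : (∫ τ in (0:ℝ)..T, τ ^ ((m:ℝ)-1) * (T-τ) ^ (((k:ℝ)+1)-1))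
        = ∫ τ in (0:ℝ)..T, τ^(m-1)*(T-τ)^k := by
      apply intervalIntegral.integral_congr
      intro τ _
      show τ ^ ((m:ℝ)-1) * (T-τ) ^ (((k:ℝ)+1)-1) = τ^(m-1)*(T-τ)^k
      rw [← hcast, Real.rpow_natCast, show ((k:ℝ)+1)-1 = ((k:ℕ):ℝ) by ring,
        Real.rpow_natCast]
    rw [hcong] at hb
    rw [← MeasureTheory.integral_Ioc_eq_integral_Ioo,
      ← intervalIntegral.integral_of_le hT0.le, hb]
    have hGm : Real.Gamma (m:ℝ) = (Nat.factorial (m-1) : ℝ) := by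
      rw [show (m:ℝ) = ((m-1:ℕ):ℝ) + 1 by rw [hcast]; ring,
        Real.Gamma_nat_eq_factorial]
    have hGk : Real.Gamma ((k:ℝ)+1) = (Nat.factorial k : ℝ) := Real.Gamma_nat_eq_factorial k
    have hGmk : Real.Gamma ((m:ℝ)+((k:ℝ)+1)) = (Nat.factorial (m+k) : ℝ) := by
      rw [show (m:ℝ)+((k:ℝ)+1) = ((m+k:ℕ):ℝ) + 1 by push_cast; ring,
        Real.Gamma_nat_eq_factorial]
    have hTp : T ^ ((m:ℝ)+((k:ℝ)+1)-1) = T^(m+k) := by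
      rw [show (m:ℝ)+((k:ℝ)+1)-1 = ((m+k:ℕ):ℝ) by push_cast; ring, Real.rpow_natCast]
    rw [hGm, hGk, hGmk, hTp]
  -- series setup
  set F : ℕ → ℝ → ℝ := fun k τ => ((m:ℝ) * τ^(m-1)) * ((-l*(T-τ))^k / Nat.factorial k) with hF
  have hFc : ∀ k, Continuous (F k) := by
    intro k
    apply Continuous.mul (continuous_const.mul (continuous_pow _))
    exact ((continuous_const.mul (continuous_const.sub continuous_id)).pow k).div_const _
  have hFint : ∀ k, Integrable (F k) (volume.restrict (Set.Ioo 0 T)) := fun k =>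
    ((hFc k).integrableOn_Icc (a := 0) (b := T)).mono_set Set.Ioo_subset_Icc_self
  -- value of each term integral
  have hIk : ∀ k : ℕ, (∫ τ in Set.Ioo (0:ℝ) T, F k τ)
      = (Nat.factorial m : ℝ) * (-l)^k * T^(m+k) / (Nat.factorial (m+k) : ℝ) := by
    intro k
    have : (∫ τ in Set.Ioo (0:ℝ) T, F k τ)
        = ∫ τ in Set.Ioo (0:ℝ) T, ((m:ℝ) * (-l)^k / Nat.factorial k) * (τ^(m-1)*(T-τ)^k) := by
      apply MeasureTheory.setIntegral_congr_fun measurableSet_Ioo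
      intro τ _
      show F k τ = _
      rw [hF]
      show ((m:ℝ) * τ^(m-1)) * ((-l*(T-τ))^k / Nat.factorial k) = _
      rw [mul_pow]
      ring
    rw [this, MeasureTheory.integral_const_mul, hJ k]
    have hmfac : (m:ℝ) * (Nat.factorial (m-1) : ℝ) = (Nat.factorial m : ℝ) := by
      rw [show Nat.factorial m = m * Nat.factorial (m-1) by
        conv_lhs => rw [show m = m - 1 + 1 by omega]
        rw [Nat.factorial_succ]
        congr 1 <;> omega]
      push_cast; ring
    have hk0 : (Nat.factorial k : ℝ) ≠ 0 := by positivity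
    field_simp
    linear_combination (-l)^k * hmfac
  -- norm integrals
  have hNk : ∀ k : ℕ, (∫ τ in Set.Ioo (0:ℝ) T, ‖F k τ‖)
      = (Nat.factorial m : ℝ) * l^k * T^(m+k) / (Nat.factorial (m+k) : ℝ) := by
    intro k
    have : (∫ τ in Set.Ioo (0:ℝ) T, ‖F k τ‖)
        = ∫ τ in Set.Ioo (0:ℝ) T, ((m:ℝ) * l^k / Nat.factorial k) * (τ^(m-1)*(T-τ)^k) := by
      apply MeasureTheory.setIntegral_congr_fun measurableSet_Ioo
      intro τ hτ
      show ‖((m:ℝ) * τ^(m-1)) * ((-l*(T-τ))^k / Nat.factorial k)‖ = _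
      rw [Real.norm_eq_abs, abs_mul, abs_div, abs_pow,
        show -l*(T-τ) = -(l*(T-τ)) by ring, abs_neg,
        abs_of_pos (show (0:ℝ) < l*(T-τ) by
          have := hτ.2; have := hτ.1; nlinarith),
        abs_of_nonneg (mul_nonneg (Nat.cast_nonneg m) (pow_nonneg hτ.1.le _)),
        abs_of_nonneg (by positivity : (0:ℝ) ≤ (Nat.factorial k : ℝ)), mul_pow]
      ring
    rw [this, MeasureTheory.integral_const_mul, hJ k]
    have hmfac : (m:ℝ) * (Nat.factorial (m-1) : ℝ) = (Nat.factorial m : ℝ) := by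
      rw [show Nat.factorial m = m * Nat.factorial (m-1) by
        conv_lhs => rw [show m = m - 1 + 1 by omega]
        rw [Nat.factorial_succ]
        congr 1 <;> omega]
      push_cast; ring
    have hk0 : (Nat.factorial k : ℝ) ≠ 0 := by positivity
    field_simp
    linear_combination hmfac
  -- summability of norm integrals
  have hsum : Summable fun k : ℕ => ∫ τ in Set.Ioo (0:ℝ) T, ‖F k τ‖ := by
    simp only [hNk]
    refine Summable.of_nonneg_of_le (fun k => by positivity) (fun k => ?_)
      (((Real.summable_pow_div_factorial (l*T))).mul_left ((Nat.factorial m : ℝ) * T^m))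
    have hR : ((Nat.factorial m : ℝ) * T^m) * ((l*T)^k / Nat.factorial k)
        = (Nat.factorial m : ℝ) * l^k * T^(m+k) / (Nat.factorial k : ℝ) := by
      rw [mul_pow, pow_add]; ring
    rw [hR]
    apply div_le_div_of_nonneg_left (by positivity) (by positivity)
    exact_mod_cast Nat.factorial_le (by omega : k ≤ m + k)
  -- exchange sum and integral
  have hswap := MeasureTheory.integral_tsum_of_summable_integral_norm
    (μ := volume.restrict (Set.Ioo (0:ℝ) T)) hFint hsum
  have hptsum : ∀ τ : ℝ, (∑' k : ℕ, F k τ) = (m:ℝ)*τ^(m-1)*Real.exp (-l*(T-τ)) := by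
    intro τ
    have hexp : Real.exp (-l*(T-τ)) = ∑' k : ℕ, (-l*(T-τ))^k / Nat.factorial k := by
      rw [Real.exp_eq_exp_ℝ, NormedSpace.exp_eq_tsum_div]
    rw [hexp, ← tsum_mul_left]
  have hL : (∫ τ in Set.Ioo (0:ℝ) T, (m:ℝ) * τ ^ (m-1) * Real.exp (-l*(T-τ)))
      = ∑' k : ℕ, (Nat.factorial m : ℝ) * (-l)^k * T^(m+k) / (Nat.factorial (m+k) : ℝ) := by
    rw [← funext hIk]
    rw [hswap]
    apply MeasureTheory.setIntegral_congr_fun measurableSet_Ioo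
    intro τ _
    exact (hptsum τ).symm
  rw [hL, mittagLeffler, Real.Gamma_nat_eq_factorial]
  rw [show (Nat.factorial m : ℝ) * (∑' k : ℕ, (-l*T)^k / Real.Gamma (1*(k:ℝ)+((m:ℝ)+1))) * T^m
      = ∑' k : ℕ, ((Nat.factorial m : ℝ) * T^m) * ((-l*T)^k / Real.Gamma (1*(k:ℝ)+((m:ℝ)+1))) by
    rw [tsum_mul_left]; ring]
  apply tsum_congr
  intro k
  have hG : Real.Gamma (1*(k:ℝ)+((m:ℝ)+1)) = (Nat.factorial (m+k) : ℝ) := by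
    rw [show (1:ℝ)*(k:ℝ)+((m:ℝ)+1) = ((m+k:ℕ):ℝ)+1 by push_cast; ring,
      Real.Gamma_nat_eq_factorial]
  rw [hG, mul_pow, pow_add]
  have : (Nat.factorial (m+k) : ℝ) ≠ 0 := by positivity
  field_simp

open intervalIntegral in
theorem caputo_half (m : ℕ) (hm : 2 ≤ m) (T : ℝ) (hT0 : 0 < T)
    (hTm : T ≤ (m : ℝ) - 1) (β : ℝ) (hβ : β ∈ Set.Ioo (0 : ℝ) 1) :
    (∫ t in Set.Ioo 0 T,
        |caputoD 0 (1 - β) (fun τ => (m : ℝ) * τ ^ (m - 1)) t - (m : ℝ) * t ^ (m - 1)|) =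
      T ^ m * (Real.Gamma ((m : ℝ) + β + 1) - Real.Gamma ((m : ℝ) + 1) * T ^ β) /
        Real.Gamma ((m : ℝ) + β + 1) := by
  obtain ⟨hβ0, hβ1⟩ := hβ
  have hm1 : (1:ℝ) < (m:ℝ) := by exact_mod_cast (by omega : 1 < m)
  have hm0 : (0:ℝ) < (m:ℝ) := by linarith
  have hGβ : 0 < Real.Gamma β := Real.Gamma_pos_of_pos hβ0
  have hGm : 0 < Real.Gamma (m:ℝ) := Real.Gamma_pos_of_pos hm0
  have hGmβ : 0 < Real.Gamma ((m:ℝ)+β) := Real.Gamma_pos_of_pos (by linarith)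
  have hGm1 : Real.Gamma ((m:ℝ)+1) = (m:ℝ) * Real.Gamma (m:ℝ) := Real.Gamma_add_one hm0.ne'
  set C : ℝ := Real.Gamma ((m:ℝ)+1) / Real.Gamma ((m:ℝ)+β) with hC
  have hcast : ((m-1 : ℕ) : ℝ) = (m:ℝ) - 1 := by
    push_cast [Nat.cast_sub (by omega : 1 ≤ m)]; ring
  -- pointwise formula
  have hpt : ∀ t ∈ Set.Ioo (0:ℝ) T,
      caputoD 0 (1 - β) (fun τ => (m : ℝ) * τ ^ (m - 1)) t = C * t ^ ((m:ℝ)+β-1) := by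
    intro t ht
    have ht0 : 0 < t := ht.1
    rw [caputoD]
    have : (∫ τ in (0:ℝ)..t, ((m:ℝ) * τ ^ (m - 1)) * (t - τ) ^ (-(1-β)))
        = (m:ℝ) * ∫ τ in (0:ℝ)..t, τ ^ ((m:ℝ)-1) * (t-τ) ^ (β-1) := by
      rw [← intervalIntegral.integral_const_mul]
      apply intervalIntegral.integral_congr
      intro τ hτ
      show ((m:ℝ) * τ ^ (m - 1)) * (t - τ) ^ (-(1-β)) = (m:ℝ) * (τ ^ ((m:ℝ)-1) * (t-τ) ^ (β-1))
      rw [show -(1-β) = β - 1 by ring, ← hcast, Real.rpow_natCast]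
      ring
    rw [this, beta_scaled hm0 hβ0 ht0, show (1:ℝ) - (1-β) = β by ring]
    rw [hC, hGm1]
    field_simp
  -- sign
  have hsign : ∀ t ∈ Set.Ioo (0:ℝ) T, C * t ^ ((m:ℝ)+β-1) ≤ (m:ℝ) * t ^ (m-1) := by
    intro t ht
    have ht0 : 0 < t := ht.1
    have htm : t ≤ (m:ℝ) + β - 1 := by linarith [ht.2]
    have h1 : t ^ β ≤ ((m:ℝ)+β-1) ^ β :=
      Real.rpow_le_rpow ht0.le htm hβ0.le
    have h2 : Real.Gamma (m:ℝ) * t ^ β ≤ Real.Gamma ((m:ℝ)+β) :=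
      le_trans (by nlinarith [Real.rpow_pos_of_pos ht0 β]) (gamma_conv_bound hm1 hβ0 hβ1)
    have hsplit : t ^ ((m:ℝ)+β-1) = t ^ (m-1) * t ^ β := by
      rw [show (m:ℝ)+β-1 = ((m:ℝ)-1) + β by ring, Real.rpow_add ht0, ← hcast,
        Real.rpow_natCast]
    rw [hsplit]
    have hCpos : 0 ≤ t ^ (m-1) := pow_nonneg ht0.le _
    have : C * t ^ β ≤ (m:ℝ) := by
      rw [hC, div_mul_eq_mul_div, div_le_iff₀ hGmβ, hGm1]
      nlinarith [h2]
    nlinarith [Real.rpow_pos_of_pos ht0 β, pow_pos ht0 (m-1)]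
  -- rewrite integrand
  have hcongr : (∫ t in Set.Ioo 0 T,
        |caputoD 0 (1 - β) (fun τ => (m : ℝ) * τ ^ (m - 1)) t - (m : ℝ) * t ^ (m - 1)|)
      = ∫ t in Set.Ioo 0 T, ((m:ℝ) * t ^ (m-1) - C * t ^ ((m:ℝ)+β-1)) := by
    apply setIntegral_congr_fun measurableSet_Ioo
    intro t ht
    show |caputoD 0 (1 - β) (fun τ => (m : ℝ) * τ ^ (m - 1)) t - (m : ℝ) * t ^ (m - 1)| = _
    rw [hpt t ht, abs_of_nonpos (by linarith [hsign t ht])]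
    ring
  rw [hcongr]
  -- compute the integral
  have hIoo : (∫ t in Set.Ioo 0 T, ((m:ℝ) * t ^ (m-1) - C * t ^ ((m:ℝ)+β-1)))
      = ∫ t in (0:ℝ)..T, ((m:ℝ) * t ^ (m-1) - C * t ^ ((m:ℝ)+β-1)) := by
    rw [intervalIntegral.integral_of_le hT0.le, MeasureTheory.integral_Ioc_eq_integral_Ioo]
  have hint1 : IntervalIntegrable (fun t : ℝ => (m:ℝ) * t ^ (m-1)) volume 0 T :=
    (continuous_const.mul (continuous_pow _)).intervalIntegrable _ _
  have hint2 : IntervalIntegrable (fun t : ℝ => C * t ^ ((m:ℝ)+β-1)) volume 0 T :=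
    (intervalIntegral.intervalIntegrable_rpow' (by linarith)).const_mul C
  rw [hIoo, intervalIntegral.integral_sub hint1 hint2,
    intervalIntegral.integral_const_mul, intervalIntegral.integral_const_mul,
    integral_pow, integral_rpow (Or.inl (by linarith))]
  have hmm : m - 1 + 1 = m := by omega
  have hβm : (m:ℝ) + β - 1 + 1 = (m:ℝ) + β := by ring
  rw [hmm, hβm]
  rw [Real.zero_rpow (by linarith : (m:ℝ)+β ≠ 0)]
  have hTmβ : T ^ ((m:ℝ)+β) = T ^ m * T ^ β := by
    rw [Real.rpow_add hT0, Real.rpow_natCast]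
  have hGrec : Real.Gamma ((m:ℝ)+β+1) = ((m:ℝ)+β) * Real.Gamma ((m:ℝ)+β) := by
    exact Real.Gamma_add_one (show ((m:ℝ)+β) ≠ 0 by positivity)
  rw [hTmβ, hGrec, hC]
  have h0 : (0:ℝ) ^ m = 0 := zero_pow (by omega)
  rw [h0]
  have hmβ0 : (m:ℝ) + β ≠ 0 := by linarith
  field_simp
  rw [hcast]
  ring

open intervalIntegral in
theorem cf_half (m : ℕ) (hm : 2 ≤ m) (T : ℝ) (hT0 : 0 < T)
    (hTm : T ≤ (m : ℝ) - 1) (β : ℝ) (hβ : β ∈ Set.Ioo (0 : ℝ) 1) :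
    (∫ t in Set.Ioo 0 T,
        |cfD 0 (1 - β) (fun τ => (m : ℝ) * τ ^ (m - 1)) t - (m : ℝ) * t ^ (m - 1)|) =
      (T ^ m / (1 - β)) * (Real.Gamma ((m : ℝ) + 1) *
        mittagLeffler 1 ((m : ℝ) + 1) (-((1 - β) / β) * T) - β) := by
  obtain ⟨hβ0, hβ1⟩ := hβ
  set l : ℝ := (1-β)/β with hldef
  have hl : 0 < l := div_pos (by linarith) hβ0
  set g' : ℝ → ℝ := fun τ => (m:ℝ) * τ ^ (m-1) with hg'
  have hgc : Continuous g' := continuous_const.mul (continuous_pow _)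
  set G : ℝ → ℝ := fun t => ∫ τ in (0:ℝ)..t, g' τ * Real.exp (l*τ) with hGdef
  set Φ : ℝ → ℝ := fun t => Real.exp (-l*t) * G t with hΦdef
  have hic : Continuous fun τ => g' τ * Real.exp (l*τ) :=
    hgc.mul (Real.continuous_exp.comp (continuous_const.mul continuous_id))
  have hG : ∀ t : ℝ, HasDerivAt G (g' t * Real.exp (l*t)) t := by
    intro t
    exact intervalIntegral.integral_hasDerivAt_right
      (hic.intervalIntegrable _ _) (hic.stronglyMeasurableAtFilter _ _) hic.continuousAt
  have hΦ : ∀ t : ℝ, HasDerivAt Φ (g' t - l * Φ t) t := by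
    intro t
    have h1 : HasDerivAt (fun t => Real.exp (-l*t)) (-l * Real.exp (-l*t)) t := by
      simpa [Function.comp_def, mul_comm] using (Real.hasDerivAt_exp (-l*t)).comp t
        ((hasDerivAt_id t).const_mul (-l))
    have h2 := h1.mul (hG t)
    have h3 : Real.exp (-l*t) * Real.exp (l*t) = 1 := by
      rw [← Real.exp_add]; norm_num
    refine h2.congr_deriv ?_
    simp only [hΦdef]
    rw [show Real.exp (-l*t) * (g' t * Real.exp (l*t))
        = g' t * (Real.exp (-l*t) * Real.exp (l*t)) by ring, h3]
    ring
  have hΦc : Continuous Φ := by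
    apply Continuous.mul (by continuity)
    exact continuous_iff_continuousAt.mpr fun t => (hG t).continuousAt
  have hΨ : ∀ t : ℝ, HasDerivAt (fun t => (t^m - Φ t)/l) (Φ t) t := by
    intro t
    have h1 : HasDerivAt (fun t : ℝ => t^m) ((m:ℝ) * t^(m-1)) t := by
      simpa using hasDerivAt_pow m t
    have := (h1.sub (hΦ t)).div_const l
    refine this.congr_deriv ?_
    field_simp [hg']
    simp only [hg']
    ring
  have hintΦ : ∫ t in (0:ℝ)..T, Φ t = (T^m - Φ T)/l := by
    have := intervalIntegral.integral_eq_sub_of_hasDerivAt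
      (f := fun t => (t^m - Φ t)/l) (fun t _ => hΨ t) (hΦc.intervalIntegrable 0 T)
    rw [this]
    have hΦ0 : Φ 0 = 0 := by simp [hΦdef, hGdef]
    show (T^m - Φ T)/l - ((0:ℝ)^m - Φ 0)/l = _
    rw [hΦ0, zero_pow (by omega : m ≠ 0)]
    ring
  -- representation of Φ as convolution integral
  have hΦrepr : ∀ t : ℝ, Φ t = ∫ τ in (0:ℝ)..t, g' τ * Real.exp (-l*(t-τ)) := by
    intro t
    simp only [hΦdef, hGdef]
    rw [← intervalIntegral.integral_const_mul]
    apply intervalIntegral.integral_congr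
    intro τ _
    show Real.exp (-l*t) * (g' τ * Real.exp (l*τ)) = g' τ * Real.exp (-l*(t-τ))
    rw [show -l*(t-τ) = -l*t + l*τ by ring, Real.exp_add]
    ring
  -- cfD in terms of Φ
  have hcf : ∀ t : ℝ, cfD 0 (1-β) g' t = (1/β) * Φ t := by
    intro t
    rw [cfD, hΦrepr t, show (1:ℝ)-(1-β) = β by ring]
  -- sign
  have hsign : ∀ t ∈ Set.Ioo (0:ℝ) T, (1/β) * Φ t ≤ g' t := by
    intro t ht
    have h1 : Φ t ≤ β * g' t := by
      rw [hΦrepr t]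
      exact sign_bound m hm β hβ0 hβ1 t ht.1 (le_trans ht.2.le hTm)
    rw [div_mul_eq_mul_div, one_mul, div_le_iff₀ hβ0]
    nlinarith [h1]
  -- rewrite integrand
  have hcongr : (∫ t in Set.Ioo 0 T, |cfD 0 (1-β) g' t - g' t|)
      = ∫ t in Set.Ioo 0 T, (g' t - (1/β) * Φ t) := by
    apply MeasureTheory.setIntegral_congr_fun measurableSet_Ioo
    intro t ht
    show |cfD 0 (1-β) g' t - g' t| = g' t - (1/β) * Φ t
    rw [hcf t, abs_of_nonpos (by linarith [hsign t ht])]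
    ring
  rw [hcongr]
  -- compute the integral
  have hint1 : IntervalIntegrable g' volume 0 T := hgc.intervalIntegrable _ _
  have hint2 : IntervalIntegrable (fun t => (1/β) * Φ t) volume 0 T :=
    (hΦc.intervalIntegrable _ _).const_mul _
  have hIoo : (∫ t in Set.Ioo 0 T, (g' t - (1/β) * Φ t))
      = ∫ t in (0:ℝ)..T, (g' t - (1/β) * Φ t) := by
    rw [intervalIntegral.integral_of_le hT0.le, MeasureTheory.integral_Ioc_eq_integral_Ioo]
  have hgint : ∫ t in (0:ℝ)..T, g' t = T^m := by
    simp only [hg']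
    rw [intervalIntegral.integral_const_mul, integral_pow,
      show m - 1 + 1 = m by omega, zero_pow (by omega : m ≠ 0)]
    field_simp
    push_cast [Nat.cast_sub (by omega : 1 ≤ m)]
    ring
  rw [hIoo, intervalIntegral.integral_sub hint1 hint2, hgint,
    intervalIntegral.integral_const_mul, hintΦ]
  -- plug series value
  have hΦT : Φ T = Real.Gamma ((m:ℝ)+1) * mittagLeffler 1 ((m:ℝ)+1) (-l*T) * T^m := by
    rw [hΦrepr T, intervalIntegral.integral_of_le hT0.le,
      MeasureTheory.integral_Ioc_eq_integral_Ioo]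
    exact series_val m hm T hT0 l hl
  rw [hΦT]
  -- final algebra
  have hβ1' : (1:ℝ) - β ≠ 0 := by linarith
  have hβl : β * l = 1 - β := by rw [hldef]; field_simp
  rw [hldef]
  have hβ0' : β ≠ 0 := hβ0.ne'
  field_simp
  ring

/-- For `g(t) = t^m` on `[0,T]` (so `g'(t) = m t^{m-1}`), `m ≥ 2`,
`0 < T ≤ m-1`, `β ∈ (0,1)`: the explicit values of the Caputo–Fabrizio and
Caputo L¹ errors of order `1-β`. -/
theorem power_error_formulas (m : ℕ) (hm : 2 ≤ m) (T : ℝ) (hT0 : 0 < T)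
    (hTm : T ≤ (m : ℝ) - 1) (β : ℝ) (hβ : β ∈ Set.Ioo (0 : ℝ) 1) :
    (∫ t in Set.Ioo 0 T,
        |cfD 0 (1 - β) (fun τ => (m : ℝ) * τ ^ (m - 1)) t - (m : ℝ) * t ^ (m - 1)|) =
      (T ^ m / (1 - β)) * (Real.Gamma ((m : ℝ) + 1) *
        mittagLeffler 1 ((m : ℝ) + 1) (-((1 - β) / β) * T) - β) ∧
    (∫ t in Set.Ioo 0 T,
        |caputoD 0 (1 - β) (fun τ => (m : ℝ) * τ ^ (m - 1)) t - (m : ℝ) * t ^ (m - 1)|) =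
      T ^ m * (Real.Gamma ((m : ℝ) + β + 1) - Real.Gamma ((m : ℝ) + 1) * T ^ β) /
        Real.Gamma ((m : ℝ) + β + 1) := by
  exact ⟨cf_half m hm T hT0 hTm β hβ, caputo_half m hm T hT0 hTm β hβ⟩
end
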